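/- Let α ∈ (0, π/2), Δ = Δ(α) and let {T_t}_{t∈Δ} be a C₀-semigroup on a Banach space X such that DAsym(T, 0) = {y ∈ X : for every ε > 0 the density of {t ∈ Δ : ‖T_t y‖ < ε} exists and equals 1} is dense in X. Then for every measurable set A ⊆ Δ with udens(A) = 1, the set P(A) = {x ∈ X : there exists a measurable A' ⊆ A with udens(A') = 1 such that ‖T_t x‖ → 0 as |t| → ∞ along t ∈ A'} is a dense Gδ subset of X. -/

import Mathlib

open MeasureTheory Filter Set Pointwise

noncomputable section

/-- The complex sector `Δ(α) = {r e^{iθ} : r ≥ 0, |θ| ≤ α}`. -/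
def sector (α : ℝ) : Set ℂ := {z : ℂ | |Complex.arg z| ≤ α}

/-- `Δ_r = {t ∈ Δ(α) : |t| < r}`. -/
def sectorBall (α r : ℝ) : Set ℂ := {z ∈ sector α | ‖z‖ < r}

/-- Upper density of a set `A` with respect to the sector `Δ(α)`. -/
def udens (α : ℝ) (A : Set ℂ) : ℝ :=
  limsup (fun r : ℝ =>
    (volume (A ∩ sectorBall α r)).toReal / (volume (sectorBall α r)).toReal) atTop

/-- Lower density of a set `A` with respect to the sector `Δ(α)`. -/
def ldens (α : ℝ) (A : Set ℂ) : ℝ :=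
  liminf (fun r : ℝ =>
    (volume (A ∩ sectorBall α r)).toReal / (volume (sectorBall α r)).toReal) atTop

/-- The filter expressing `|t| → ∞` along `t ∈ A`. -/
def alongAbs (A : Set ℂ) : Filter ℂ :=
  (atTop.comap (fun z : ℂ => ‖z‖)) ⊓ 𝓟 A

/-- A `C₀`-semigroup of continuous linear operators indexed by the sector `Δ(α)`. -/
structure CZeroSemigroup (α : ℝ) (𝕜 X : Type*) [NontriviallyNormedField 𝕜]
    [NormedAddCommGroup X] [NormedSpace 𝕜 X] where
  T : ℂ → X →L[𝕜] X
  map_zero' : T 0 = ContinuousLinearMap.id 𝕜 X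
  map_add' : ∀ s ∈ sector α, ∀ t ∈ sector α, T (s + t) = (T s).comp (T t)
  cont' : ∀ x : X, ContinuousOn (fun t => T t x) (sector α)

variable {α : ℝ} {𝕜 X : Type*} [NontriviallyNormedField 𝕜]
  [NormedAddCommGroup X] [NormedSpace 𝕜 X]

/-- Distributional sensitivity. -/
def DistSensitive (S : CZeroSemigroup α 𝕜 X) : Prop :=
  ∃ δ > (0:ℝ), ∀ x : X, ∀ ε > (0:ℝ), ∃ y : X, ‖x - y‖ < ε ∧
    udens α {t ∈ sector α | δ < ‖S.T t x - S.T t y‖} = 1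

/-- Distributionally unbounded vector. -/
def DistUnbounded (S : CZeroSemigroup α 𝕜 X) (x : X) : Prop :=
  ∃ A : Set ℂ, A ⊆ sector α ∧ MeasurableSet A ∧ udens α A = 1 ∧
    Tendsto (fun t => ‖S.T t x‖) (alongAbs A) atTop

/-- Distributionally semi-irregular vector. -/
def DistSemiIrregular (S : CZeroSemigroup α 𝕜 X) (x : X) : Prop :=
  ∃ A B : Set ℂ, A ⊆ sector α ∧ B ⊆ sector α ∧ MeasurableSet A ∧ MeasurableSet B ∧
    udens α A = 1 ∧ udens α B = 1 ∧
    Tendsto (fun t => ‖S.T t x‖) (alongAbs A) (nhds 0) ∧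
    ∃ δ > (0:ℝ), ∀ t ∈ B, δ ≤ ‖S.T t x‖

/-- Distributionally irregular vector. -/
def DistIrregular (S : CZeroSemigroup α 𝕜 X) (x : X) : Prop :=
  ∃ A B : Set ℂ, A ⊆ sector α ∧ B ⊆ sector α ∧ MeasurableSet A ∧ MeasurableSet B ∧
    udens α A = 1 ∧ udens α B = 1 ∧
    Tendsto (fun t => ‖S.T t x‖) (alongAbs A) (nhds 0) ∧
    Tendsto (fun t => ‖S.T t x‖) (alongAbs B) atTop

/-- Distributionally chaotic pair. -/
def DistChaoticPair (S : CZeroSemigroup α 𝕜 X) (x y : X) : Prop :=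
  ∃ δ > (0:ℝ), ∀ ε > (0:ℝ),
    udens α {t ∈ sector α | ‖S.T t x - S.T t y‖ < ε} = 1 ∧
    udens α {t ∈ sector α | δ < ‖S.T t x - S.T t y‖} = 1

/-- Distributionally scrambled set. -/
def DistScrambled (S : CZeroSemigroup α 𝕜 X) (K : Set X) : Prop :=
  ∀ x ∈ K, ∀ y ∈ K, x ≠ y → DistChaoticPair S x y

namespace Stmt15Aux

def ratio (α : ℝ) (A : Set ℂ) (r : ℝ) : ℝ :=
  (volume (A ∩ sectorBall α r)).toReal / (volume (sectorBall α r)).toReal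

lemma udens_eq (α : ℝ) (A : Set ℂ) : udens α A = limsup (ratio α A) atTop := rfl
lemma ldens_eq (α : ℝ) (A : Set ℂ) : ldens α A = liminf (ratio α A) atTop := rfl

lemma mem_sector_iff {α : ℝ} (hα0 : 0 ≤ α) (hαπ : α ≤ Real.pi) {z : ℂ} :
    z ∈ sector α ↔ ‖z‖ * Real.cos α ≤ z.re := by
  rcases eq_or_ne z 0 with rfl | hz
  · simp [sector, Complex.arg_zero, hα0]
  · have habs : 0 < ‖z‖ := norm_pos_iff.mpr hz
    have harg : |Complex.arg z| ≤ Real.pi := Complex.abs_arg_le_pi z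
    have hcos : Real.cos (Complex.arg z) = z.re / ‖z‖ := Complex.cos_arg hz
    constructor
    · intro h
      have h1 : Real.cos α ≤ Real.cos |Complex.arg z| :=
        Real.cos_le_cos_of_nonneg_of_le_pi (abs_nonneg _) hαπ h
      rw [Real.cos_abs, hcos] at h1
      have := mul_le_mul_of_nonneg_left h1 habs.le
      calc ‖z‖ * Real.cos α ≤ ‖z‖ * (z.re / ‖z‖) := this
        _ = z.re := by field_simp
    · intro h
      show |Complex.arg z| ≤ α
      by_contra hlt
      push_neg at hlt
      have h2 : Real.cos |Complex.arg z| < Real.cos α :=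
        Real.strictAntiOn_cos ⟨hα0, hαπ⟩ ⟨abs_nonneg _, harg⟩ hlt
      rw [Real.cos_abs, hcos] at h2
      have h3 : z.re < Real.cos α * ‖z‖ := (div_lt_iff₀ habs).1 h2
      nlinarith
  
lemma sector_isClosed {α : ℝ} (hα0 : 0 ≤ α) (hαπ : α ≤ Real.pi) : IsClosed (sector α) := by
  have h : sector α = {z : ℂ | ‖z‖ * Real.cos α ≤ z.re} :=
    Set.ext fun z => mem_sector_iff hα0 hαπ
  rw [h]
  exact isClosed_le (continuous_norm.mul continuous_const) Complex.continuous_re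

lemma measurableSet_sector (α : ℝ) : MeasurableSet (sector α) := by
  have h : sector α = (fun z : ℂ => |Complex.arg z|) ⁻¹' (Set.Iic α) := rfl
  rw [h]
  exact Complex.measurable_arg.abs measurableSet_Iic

lemma measurableSet_sectorBall (α r : ℝ) : MeasurableSet (sectorBall α r) := by
  have h : sectorBall α r = sector α ∩ (fun z : ℂ => ‖z‖) ⁻¹' (Set.Iio r) := rfl
  rw [h]
  exact (measurableSet_sector α).inter (continuous_norm.measurable measurableSet_Iio)

lemma sectorBall_empty (α : ℝ) {r : ℝ} (hr : r ≤ 0) : sectorBall α r = ∅ := by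
  rw [Set.eq_empty_iff_forall_notMem]
  rintro z ⟨-, h⟩
  exact absurd h (not_lt.2 (hr.trans (norm_nonneg z)))

lemma vol_ne_top (α r : ℝ) : volume (sectorBall α r) ≠ ⊤ := by
  have hsub : sectorBall α r ⊆ Metric.ball (0:ℂ) r := by
    rintro z ⟨-, h⟩
    simpa [Metric.mem_ball, Complex.dist_eq] using h
  exact ne_top_of_le_ne_top measure_ball_lt_top.ne (measure_mono hsub)

lemma sectorBall_mono (α : ℝ) {r r' : ℝ} (h : r ≤ r') : sectorBall α r ⊆ sectorBall α r' :=
  fun _ hz => ⟨hz.1, hz.2.trans_le h⟩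

lemma vol_pos {α : ℝ} (hα : 0 < α) (hα2 : α < Real.pi / 2) {r : ℝ} (hr : 0 < r) :
    0 < volume (sectorBall α r) := by
  have hαπ : α ≤ Real.pi := by linarith [Real.pi_pos]
  set U : Set ℂ := {z : ℂ | ‖z‖ * Real.cos α < z.re ∧ ‖z‖ < r} with hU
  have hUopen : IsOpen U :=
    (isOpen_lt (continuous_norm.mul continuous_const) Complex.continuous_re).inter
      (isOpen_lt continuous_norm continuous_const)
  have hUsub : U ⊆ sectorBall α r := fun z hz =>
    ⟨(mem_sector_iff hα.le hαπ).2 hz.1.le, hz.2⟩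
  have hcos1 : Real.cos α < 1 := by
    have := Real.strictAntiOn_cos (Set.mem_Icc.2 ⟨le_refl 0, Real.pi_pos.le⟩)
      (Set.mem_Icc.2 ⟨hα.le, hαπ⟩) hα
    simpa [Real.cos_zero] using this
  have hUne : ((r/2 : ℝ) : ℂ) ∈ U := by
    have habs : ‖((r/2 : ℝ) : ℂ)‖ = r/2 := by
      rw [Complex.norm_real, Real.norm_eq_abs]; exact abs_of_pos (by linarith)
    constructor
    · rw [habs, Complex.ofReal_re]
      nlinarith
    · rw [habs]; linarith
  exact lt_of_lt_of_le (hUopen.measure_pos volume ⟨_, hUne⟩) (measure_mono hUsub)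

lemma smul_sectorBall (α : ℝ) {r : ℝ} (hr : 0 < r) : sectorBall α r = r • sectorBall α 1 := by
  ext z
  rw [Set.mem_smul_set_iff_inv_smul_mem₀ (ne_of_gt hr)]
  have harg : Complex.arg (r⁻¹ • z) = Complex.arg z := by
    rw [Complex.real_smul, Complex.arg_real_mul z (inv_pos.2 hr)]
  have habs : ‖r⁻¹ • z‖ = r⁻¹ * ‖z‖ := by
    rw [Complex.real_smul, norm_mul, Complex.norm_real, Real.norm_eq_abs, abs_of_pos (inv_pos.2 hr)]
  constructor
  · rintro ⟨h1, h2⟩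
    refine ⟨show |Complex.arg _| ≤ α by rw [harg]; exact h1, ?_⟩
    rw [habs, ← div_eq_inv_mul, div_lt_one hr]
    exact h2
  · rintro ⟨h1, h2⟩
    rw [habs, ← div_eq_inv_mul, div_lt_one hr] at h2
    refine ⟨?_, h2⟩
    have := h1
    rwa [show (r⁻¹ • z ∈ sector α) ↔ |Complex.arg (r⁻¹ • z)| ≤ α from Iff.rfl, harg] at this

lemma vol_eq (α : ℝ) {r : ℝ} (hr : 0 ≤ r) :
    volume (sectorBall α r) = ENNReal.ofReal (r^2) * volume (sectorBall α 1) := by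
  rcases eq_or_lt_of_le hr with rfl | hr
  · rw [sectorBall_empty α le_rfl]
    simp
  · rw [smul_sectorBall α hr, Measure.addHaar_smul volume r, Complex.finrank_real_complex,
      abs_of_nonneg (by positivity : (0:ℝ) ≤ r ^ 2)]

lemma tendsto_vol {α : ℝ} (hα : 0 < α) (hα2 : α < Real.pi / 2) :
    Tendsto (fun r : ℝ => (volume (sectorBall α r)).toReal) atTop atTop := by
  have h1 : 0 < (volume (sectorBall α 1)).toReal :=
    ENNReal.toReal_pos (vol_pos hα hα2 one_pos).ne' (vol_ne_top α 1)
  have heq : ∀ᶠ r : ℝ in atTop,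
      r^2 * (volume (sectorBall α 1)).toReal = (volume (sectorBall α r)).toReal := by
    filter_upwards [eventually_ge_atTop (0:ℝ)] with r hr
    rw [vol_eq α hr, ENNReal.toReal_mul, ENNReal.toReal_ofReal (by positivity)]
  refine Tendsto.congr' heq ?_
  exact (tendsto_pow_atTop two_ne_zero).atTop_mul_const h1



lemma div_mono_num {a b c : ℝ} (h : a ≤ b) (hc : 0 ≤ c) : a / c ≤ b / c := by
  rcases eq_or_lt_of_le hc with rfl | hc
  · simp
  · gcongr

lemma ratio_nonneg (α : ℝ) (A : Set ℂ) (r : ℝ) : 0 ≤ ratio α A r :=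
  div_nonneg ENNReal.toReal_nonneg ENNReal.toReal_nonneg

lemma num_le (α : ℝ) (A : Set ℂ) (r : ℝ) :
    (volume (A ∩ sectorBall α r)).toReal ≤ (volume (sectorBall α r)).toReal :=
  ENNReal.toReal_mono (vol_ne_top α r) (measure_mono Set.inter_subset_right)

lemma ratio_le_one (α : ℝ) (A : Set ℂ) (r : ℝ) : ratio α A r ≤ 1 :=
  div_le_one_of_le₀ (num_le α A r) ENNReal.toReal_nonneg

lemma ratio_mono (α : ℝ) {A A' : Set ℂ} (h : A ⊆ A') (r : ℝ) : ratio α A r ≤ ratio α A' r := by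
  unfold ratio
  apply div_mono_num _ ENNReal.toReal_nonneg
  exact ENNReal.toReal_mono (ne_top_of_le_ne_top (vol_ne_top α r)
    (measure_mono Set.inter_subset_right)) (measure_mono (Set.inter_subset_inter_left _ h))

lemma bddR (α : ℝ) (A : Set ℂ) : IsBoundedUnder (· ≤ ·) atTop (ratio α A) :=
  isBoundedUnder_of ⟨1, fun r => ratio_le_one α A r⟩

lemma bddL (α : ℝ) (A : Set ℂ) : IsBoundedUnder (· ≥ ·) atTop (ratio α A) :=
  isBoundedUnder_of ⟨0, fun r => ratio_nonneg α A r⟩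

lemma cobdd (α : ℝ) (A : Set ℂ) : IsCoboundedUnder (· ≤ ·) atTop (ratio α A) :=
  (bddL α A).isCoboundedUnder_le

lemma udens_eq_one_iff (α : ℝ) (A : Set ℂ) :
    udens α A = 1 ↔ ∀ c < (1:ℝ), ∃ᶠ r in atTop, c < ratio α A r := by
  rw [udens_eq]
  constructor
  · intro h c hc
    exact frequently_lt_of_lt_limsup (cobdd α A) (by rw [h]; exact hc)
  · intro h
    refine le_antisymm (limsup_le_of_le (cobdd α A)
      (Eventually.of_forall fun r => ratio_le_one α A r)) ?_
    by_contra hlt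
    push_neg at hlt
    set L := limsup (ratio α A) atTop with hL
    have h3 : (L+1)/2 < 1 := by linarith
    have h4 : L < (L+1)/2 := by linarith
    have := le_limsup_of_frequently_le ((h _ h3).mono fun r hr => hr.le) (bddR α A)
    rw [← hL] at this
    linarith

lemma udens_freq {α : ℝ} {A : Set ℂ} (h : udens α A = 1) {c : ℝ} (hc : c < 1) :
    ∃ᶠ r in atTop, c < ratio α A r := (udens_eq_one_iff α A).1 h c hc

lemma ldens_eventually {α : ℝ} {A : Set ℂ} (h : ldens α A = 1) {c : ℝ} (hc : c < 1) :
    ∀ᶠ r in atTop, c < ratio α A r := by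
  apply eventually_lt_of_lt_liminf _ (bddL α A)
  rw [← ldens_eq, h]; exact hc

lemma ratio_inter (α : ℝ) {C : Set ℂ} (hC : MeasurableSet C) (A : Set ℂ) (r : ℝ) :
    ratio α A r + ratio α C r - 1 ≤ ratio α (A ∩ C) r := by
  set B := sectorBall α r with hB
  have hBfin : volume B ≠ ⊤ := vol_ne_top α r
  have hfin1 : volume (A ∩ B) ≠ ⊤ := ne_top_of_le_ne_top hBfin (measure_mono Set.inter_subset_right)
  have hfin2 : volume (C ∩ B) ≠ ⊤ := ne_top_of_le_ne_top hBfin (measure_mono Set.inter_subset_right)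
  have hfin3 : volume (A ∩ C ∩ B) ≠ ⊤ :=
    ne_top_of_le_ne_top hBfin (measure_mono Set.inter_subset_right)
  have hkey : (volume (A ∩ B)).toReal + (volume (C ∩ B)).toReal ≤
      (volume B).toReal + (volume (A ∩ C ∩ B)).toReal := by
    have h1 : volume (A ∩ B) + volume (C ∩ B) =
        volume ((A ∩ B) ∪ (C ∩ B)) + volume ((A ∩ B) ∩ (C ∩ B)) :=
      (measure_union_add_inter _ (hC.inter (measurableSet_sectorBall α r))).symm
    have h2 : volume ((A ∩ B) ∪ (C ∩ B)) ≤ volume B := by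
      apply measure_mono
      rintro z (hz | hz) <;> exact hz.2
    have h3 : (A ∩ B) ∩ (C ∩ B) = A ∩ C ∩ B := by
      ext z
      simp only [Set.mem_inter_iff]
      tauto
    have h4 : volume (A ∩ B) + volume (C ∩ B) ≤ volume B + volume (A ∩ C ∩ B) := by
      rw [h1, h3]
      exact add_le_add h2 le_rfl
    have h5 := ENNReal.toReal_mono (by
      exact ENNReal.add_ne_top.2 ⟨hBfin, hfin3⟩) h4
    rwa [ENNReal.toReal_add hfin1 hfin2, ENNReal.toReal_add hBfin hfin3] at h5
  rcases eq_or_lt_of_le (ENNReal.toReal_nonneg : (0:ℝ) ≤ (volume B).toReal) with hv0 | hv0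
  · unfold ratio
    rw [← hB, ← hv0]
    simp only [div_zero]
    norm_num
  · have heq : ratio α A r + ratio α C r - 1 =
        ((volume (A ∩ B)).toReal + (volume (C ∩ B)).toReal - (volume B).toReal) /
          (volume B).toReal := by
      unfold ratio
      rw [← hB]
      field_simp
    rw [heq]
    unfold ratio
    rw [← hB]
    exact div_mono_num (by linarith) ENNReal.toReal_nonneg

lemma udens_inter_one (α : ℝ) {A C : Set ℂ} (hC : MeasurableSet C)
    (hA1 : udens α A = 1) (hC1 : ldens α C = 1) : udens α (A ∩ C) = 1 := by
  rw [udens_eq_one_iff]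
  intro c hc
  have hc2 : (1 + c)/2 < 1 := by linarith
  refine ((udens_freq hA1 hc2).and_eventually (ldens_eventually hC1 hc2)).mono ?_
  rintro r ⟨h1, h2⟩
  have := ratio_inter α hC A r
  linarith

lemma udens_inter_abs {α : ℝ} (hα : 0 < α) (hα2 : α < Real.pi / 2) {A : Set ℂ}
    (h : udens α A = 1) (R : ℝ) : udens α (A ∩ {z : ℂ | R ≤ ‖z‖}) = 1 := by
  rw [udens_eq_one_iff]
  intro c hc
  set δ := (1 - c)/2 with hδdef
  have hδ : 0 < δ := by rw [hδdef]; linarith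
  have hc2 : c + δ < 1 := by rw [hδdef]; linarith
  set K := (volume (sectorBall α R)).toReal with hK
  have hKnn : 0 ≤ K := ENNReal.toReal_nonneg
  have hev : ∀ᶠ r in atTop, K / (volume (sectorBall α r)).toReal < δ := by
    filter_upwards [(tendsto_vol hα hα2).eventually_ge_atTop (K / δ + 1)] with r hr
    have hKδ : (0:ℝ) ≤ K / δ := by positivity
    have hpos : 0 < (volume (sectorBall α r)).toReal := by linarith
    have h7 : δ * (K/δ + 1) ≤ δ * (volume (sectorBall α r)).toReal :=
      mul_le_mul_of_nonneg_left hr hδ.le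
    have h8 : δ * (K/δ + 1) = K + δ := by field_simp
    rw [div_lt_iff₀ hpos]
    nlinarith
  refine ((udens_freq h hc2).and_eventually hev).mono ?_
  rintro r ⟨h1, h2⟩
  set B := sectorBall α r with hB
  set Z := {z : ℂ | R ≤ ‖z‖} with hZ
  rcases eq_or_lt_of_le (ENNReal.toReal_nonneg : (0:ℝ) ≤ (volume B).toReal) with hv0 | hv0
  · have hA0 : ratio α A r = 0 := by
      have := ratio_le_one α A r
      have h2 := ratio_nonneg α A r
      unfold ratio at *
      rw [← hB, ← hv0] at *
      simp [div_zero]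
    rw [hA0] at h1
    have : c < 0 := by linarith
    exact lt_of_lt_of_le this (ratio_nonneg α _ r)
  · have hBfin : volume B ≠ ⊤ := vol_ne_top α r
    have hfinZ : volume ((A ∩ Z) ∩ B) ≠ ⊤ :=
      ne_top_of_le_ne_top hBfin (measure_mono Set.inter_subset_right)
    have hfinK : volume (sectorBall α R) ≠ ⊤ := vol_ne_top α R
    have hsub : A ∩ B ⊆ ((A ∩ Z) ∩ B) ∪ sectorBall α R := by
      rintro z ⟨hzA, hzB⟩
      by_cases hzR : R ≤ ‖z‖
      · exact Or.inl ⟨⟨hzA, hzR⟩, hzB⟩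
      · exact Or.inr ⟨hzB.1, not_le.1 hzR⟩
    have hx : (volume (A ∩ B)).toReal ≤ (volume ((A ∩ Z) ∩ B)).toReal + K := by
      have h5 := (measure_mono hsub).trans (measure_union_le (μ := volume) ((A ∩ Z) ∩ B) (sectorBall α R))
      have h6 := ENNReal.toReal_mono (ENNReal.add_ne_top.2 ⟨hfinZ, hfinK⟩) h5
      rwa [ENNReal.toReal_add hfinZ hfinK] at h6
    have hfinal : ratio α A r - K / (volume B).toReal ≤ ratio α (A ∩ Z) r := by
      unfold ratio
      rw [← hB, div_sub_div_same]
      exact div_mono_num (by linarith) ENNReal.toReal_nonneg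
    have := h2
    linarith [hfinal, h1, h2]


lemma construction {α : ℝ} (hα : 0 < α) (hα2 : α < Real.pi / 2) {A : Set ℂ}
    (hA : A ⊆ sector α) (E : ℕ → Set ℂ) (hEA : ∀ n, E n ⊆ A)
    (hEm : ∀ n, MeasurableSet (E n)) (hmono : ∀ m n : ℕ, n ≤ m → E m ⊆ E n)
    (hfreq : ∀ n : ℕ, ∀ c < (1:ℝ), ∃ᶠ r in atTop, c < ratio α (E n) r)
    (f : ℂ → ℝ) (hf0 : ∀ t, 0 ≤ f t)
    (hfE : ∀ n : ℕ, ∀ t ∈ E n, f t < 1 / (n + 1)) :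
    ∃ A', A' ⊆ A ∧ MeasurableSet A' ∧ udens α A' = 1 ∧
      Tendsto f (alongAbs A') (nhds 0) := by
  have key : ∀ (n : ℕ) (R : ℝ), ∃ s : ℝ, R + 1 ≤ s ∧ (n+1 : ℝ) ≤ s ∧
      (n+1 : ℝ) * (volume (sectorBall α R)).toReal ≤ (volume (sectorBall α s)).toReal ∧
      1 - 1/(n+1) < ratio α (E n) s := by
    intro n R
    have h1 : (1 : ℝ) - 1/(n+1) < 1 := by
      have h0 : (0:ℝ) < 1/(n+1) := by positivity
      linarith
    have hev : ∀ᶠ s : ℝ in atTop, R + 1 ≤ s ∧ (n+1:ℝ) ≤ s ∧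
        (n+1 : ℝ) * (volume (sectorBall α R)).toReal ≤ (volume (sectorBall α s)).toReal := by
      filter_upwards [eventually_ge_atTop (R+1), eventually_ge_atTop ((n:ℝ)+1),
        (tendsto_vol hα hα2).eventually_ge_atTop
          ((n+1 : ℝ) * (volume (sectorBall α R)).toReal)] with s hs1 hs2 hs3
      exact ⟨hs1, hs2, hs3⟩
    obtain ⟨s, hs1, hs2⟩ := ((hfreq n _ h1).and_eventually hev).exists
    exact ⟨s, hs2.1, hs2.2.1, hs2.2.2, hs1⟩
  set r : ℕ → ℝ := fun n => Nat.rec (1:ℝ) (fun n R => (key n R).choose) n with hr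
  have hrsucc : ∀ n, r (n+1) = (key n (r n)).choose := fun n => rfl
  have hspec : ∀ n : ℕ, r n + 1 ≤ r (n+1) ∧ (n+1:ℝ) ≤ r (n+1) ∧
      (n+1:ℝ) * (volume (sectorBall α (r n))).toReal
        ≤ (volume (sectorBall α (r (n+1)))).toReal ∧
      1 - 1/(n+1) < ratio α (E n) (r (n+1)) := by
    intro n
    rw [hrsucc n]
    exact (key n (r n)).choose_spec
  have hrpos : ∀ n, 1 ≤ r n := by
    intro n
    induction n with
    | zero => exact le_refl 1
    | succ n ih => linarith [(hspec n).1]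
  have hrmono : Monotone r := monotone_nat_of_le_succ (fun n => by linarith [(hspec n).1])
  set A' : Set ℂ := ⋃ n, E n ∩ (sectorBall α (r (n+1)) \ sectorBall α (r n)) with hA'
  have hA'A : A' ⊆ A := by
    rintro z hz
    obtain ⟨n, hn⟩ := Set.mem_iUnion.1 hz
    exact hEA n hn.1
  have hA'm : MeasurableSet A' :=
    MeasurableSet.iUnion fun n => (hEm n).inter
      ((measurableSet_sectorBall α _).diff (measurableSet_sectorBall α _))
  refine ⟨A', hA'A, hA'm, ?_, ?_⟩
  · rw [udens_eq_one_iff]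
    intro c hc
    rw [frequently_atTop]
    intro N
    obtain ⟨n, hn⟩ := exists_nat_gt (max (2/(1-c)) N)
    have hmaxN := le_max_right (2/(1-c)) N
    have hmaxc := le_max_left (2/(1-c)) N
    have hnN : (N : ℝ) ≤ r (n+1) := by
      have := (hspec n).2.1
      have hNn : N ≤ (n:ℝ) := le_trans hmaxN hn.le
      linarith
    have h2n : 2/((n:ℝ)+1) < 1 - c := by
      have hn1 : 2/(1-c) < (n:ℝ)+1 := by linarith [hmaxc.trans_lt hn]
      rw [div_lt_iff₀ (by linarith : (0:ℝ) < 1 - c)] at hn1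
      rw [div_lt_iff₀ (by positivity : (0:ℝ) < (n:ℝ)+1)]
      nlinarith
    refine ⟨r (n+1), hnN, ?_⟩
    have hvpos : 0 < (volume (sectorBall α (r (n+1)))).toReal :=
      ENNReal.toReal_pos
        (vol_pos hα hα2 (by linarith [hrpos (n+1)] : (0:ℝ) < r (n+1))).ne' (vol_ne_top _ _)
    set B1 := sectorBall α (r (n+1)) with hB1
    set B0 := sectorBall α (r n) with hB0
    have hsub : E n ∩ B1 ⊆ (A' ∩ B1) ∪ B0 := by
      rintro z ⟨hzE, hzB⟩
      by_cases hz0 : z ∈ B0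
      · exact Or.inr hz0
      · exact Or.inl ⟨Set.mem_iUnion.2 ⟨n, ⟨hzE, hzB, hz0⟩⟩, hzB⟩
    have hfinA : volume (A' ∩ B1) ≠ ⊤ :=
      ne_top_of_le_ne_top (vol_ne_top α _) (measure_mono Set.inter_subset_right)
    have hfin0 : volume B0 ≠ ⊤ := vol_ne_top α _
    have hx : (volume (E n ∩ B1)).toReal ≤ (volume (A' ∩ B1)).toReal + (volume B0).toReal := by
      have h5 := (measure_mono hsub).trans (measure_union_le (μ := volume) (A' ∩ B1) B0)
      have h6 := ENNReal.toReal_mono (ENNReal.add_ne_top.2 ⟨hfinA, hfin0⟩) h5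
      rwa [ENNReal.toReal_add hfinA hfin0] at h6
    have hdiv : (volume B0).toReal / (volume B1).toReal ≤ 1/((n:ℝ)+1) := by
      rw [div_le_div_iff₀ hvpos (by positivity : (0:ℝ) < (n:ℝ)+1)]
      have h9 := (hspec n).2.2.1
      nlinarith
    have hratio := (hspec n).2.2.2
    have hge : ratio α (E n) (r (n+1)) - (volume B0).toReal / (volume B1).toReal
        ≤ ratio α A' (r (n+1)) := by
      unfold ratio
      rw [← hB1, div_sub_div_same]
      exact div_mono_num (by linarith) ENNReal.toReal_nonneg
    have h10 : (0:ℝ) < 1/((n:ℝ)+1) := by positivity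
    have := ratio_nonneg α A' (r (n+1))
    have h11 : 2/((n:ℝ)+1) = 2 * (1/((n:ℝ)+1)) := by ring
    push_cast at hratio
    linarith
  · rw [Metric.tendsto_nhds]
    intro ε hε
    obtain ⟨n, hn⟩ := exists_nat_one_div_lt hε
    show ∀ᶠ t in (atTop.comap (fun z : ℂ => ‖z‖)) ⊓ 𝓟 A', dist (f t) 0 < ε
    rw [eventually_inf_principal]
    have hmem : {t : ℂ | r (n+1) ≤ ‖t‖} ∈
        atTop.comap (fun z : ℂ => ‖z‖) :=
      preimage_mem_comap (mem_atTop (r (n+1)))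
    filter_upwards [hmem] with t ht htA'
    obtain ⟨m, hm⟩ := Set.mem_iUnion.1 htA'
    have h1 : ‖t‖ < r (m+1) := hm.2.1.2
    have hnm : n ≤ m := by
      by_contra hcon
      push_neg at hcon
      have : r (m+1) ≤ r (n+1) := hrmono (Nat.succ_le_succ hcon.le)
      have ht' : r (n+1) ≤ ‖t‖ := ht
      linarith
    rw [Real.dist_eq, sub_zero, abs_of_nonneg (hf0 t)]
    exact lt_trans (hfE n t (hmono m n hnm hm.1)) hn


section Semigroup

variable {α : ℝ} {𝕜 X : Type*} [NontriviallyNormedField 𝕜]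
  [NormedAddCommGroup X] [NormedSpace 𝕜 X]

lemma meas_lt (S : CZeroSemigroup α 𝕜 X) (x : X) (ε : ℝ) :
    MeasurableSet {t ∈ sector α | ‖S.T t x‖ < ε} := by
  obtain ⟨u, hu, hequ⟩ :=
    (continuousOn_iff'.1 ((S.cont' x).norm)) (Set.Iio ε) isOpen_Iio
  have h : {t ∈ sector α | ‖S.T t x‖ < ε} = u ∩ sector α := by
    rw [← hequ]
    ext z
    exact ⟨fun h => ⟨h.2, h.1⟩, fun h => ⟨h.2, h.1⟩⟩
  rw [h]
  exact hu.measurableSet.inter (measurableSet_sector α)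

lemma isOpen_gt (hα : 0 < α) (hα2 : α < Real.pi / 2) [CompleteSpace X]
    (S : CZeroSemigroup α 𝕜 X) {A : Set ℂ}
    {ε : ℝ} (hε : 0 < ε) (rr c : ℝ) (hc : 0 ≤ c) :
    IsOpen {x : X | c < ratio α (A ∩ {t ∈ sector α | ‖S.T t x‖ < ε}) rr} := by
  have hαπ : α ≤ Real.pi := by linarith [Real.pi_pos]
  rcases le_or_gt rr 0 with hr | hr
  · have hempty : ∀ x : X, ratio α (A ∩ {t ∈ sector α | ‖S.T t x‖ < ε}) rr = 0 := by
      intro x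
      unfold ratio
      rw [sectorBall_empty α hr]
      simp
    have h : {x : X | c < ratio α (A ∩ {t ∈ sector α | ‖S.T t x‖ < ε}) rr} = ∅ := by
      rw [Set.eq_empty_iff_forall_notMem]
      intro x hx
      rw [Set.mem_setOf_eq, hempty x] at hx
      linarith
    rw [h]; exact isOpen_empty
  · rw [Metric.isOpen_iff]
    intro x hx
    rw [Set.mem_setOf_eq] at hx
    set B := sectorBall α rr with hB
    have hvpos : 0 < (volume B).toReal :=
      ENNReal.toReal_pos (vol_pos hα hα2 hr).ne' (vol_ne_top α rr)
    have hBfin : volume B ≠ ⊤ := vol_ne_top α rr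
    have hx' : ENNReal.ofReal (c * (volume B).toReal)
        < volume ((A ∩ {t ∈ sector α | ‖S.T t x‖ < ε}) ∩ B) := by
      rw [ENNReal.ofReal_lt_iff_lt_toReal (by positivity)
        (ne_top_of_le_ne_top hBfin (measure_mono Set.inter_subset_right))]
      unfold ratio at hx
      rw [← hB, lt_div_iff₀ hvpos] at hx
      exact hx
    set Em : ℕ → Set ℂ := fun m => (A ∩ {t ∈ sector α | ‖S.T t x‖ ≤ ε - 1/(m+1)}) ∩ B with hEmdef
    have hmono : Monotone Em := by
      intro m m' hmm'
      have hinv : (1:ℝ)/(m'+1) ≤ 1/(m+1) := by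
        apply one_div_le_one_div_of_le (by positivity)
        have : (m:ℝ) ≤ m' := Nat.cast_le.2 hmm'
        linarith
      rintro z ⟨⟨hzA, hzs, hz⟩, hzB⟩
      exact ⟨⟨hzA, hzs, le_trans hz (by linarith)⟩, hzB⟩
    have hunion : ⋃ m, Em m = (A ∩ {t ∈ sector α | ‖S.T t x‖ < ε}) ∩ B := by
      ext z
      rw [Set.mem_iUnion]
      constructor
      · rintro ⟨m, ⟨⟨hzA, hzs, hz⟩, hzB⟩⟩
        have hp : (0:ℝ) < 1/(m+1) := by positivity
        exact ⟨⟨hzA, hzs, by linarith⟩, hzB⟩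
      · rintro ⟨⟨hzA, hzs, hz⟩, hzB⟩
        obtain ⟨m, hm⟩ := exists_nat_one_div_lt (by linarith : (0:ℝ) < ε - ‖S.T z x‖)
        exact ⟨m, ⟨⟨hzA, hzs, by linarith⟩, hzB⟩⟩
    have htends := tendsto_measure_iUnion_atTop (μ := volume) hmono
    rw [hunion] at htends
    obtain ⟨m, hm⟩ := (htends.eventually (eventually_gt_nhds hx')).exists
    set K := sector α ∩ Metric.closedBall (0:ℂ) rr with hK
    have hKcomp : IsCompact K :=
      (isCompact_closedBall (0:ℂ) rr).inter_left (sector_isClosed hα.le hαπ)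
    have hbdd : ∀ z : X, ∃ C, ∀ i : K, ‖S.T i z‖ ≤ C := by
      intro z
      obtain ⟨C, hC⟩ := hKcomp.exists_bound_of_continuousOn
        ((S.cont' z).mono Set.inter_subset_left)
      exact ⟨C, fun i => hC i i.2⟩
    obtain ⟨M, hM⟩ := banach_steinhaus (g := fun i : K => S.T i) hbdd
    set M' := max M 0 with hM'def
    have hM'0 : 0 ≤ M' := le_max_right _ _
    refine ⟨(1/(m+1))/(M'+1), by positivity, ?_⟩
    intro y hy
    rw [Metric.mem_ball, dist_eq_norm] at hy
    rw [Set.mem_setOf_eq]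
    have hlt : M' * ‖y - x‖ < 1/(m+1) := by
      have h1 : M' * ‖y-x‖ ≤ M' * ((1/(m+1))/(M'+1)) :=
        mul_le_mul_of_nonneg_left hy.le hM'0
      have h2 : M' * ((1/((m:ℝ)+1))/(M'+1)) < 1/(m+1) := by
        rw [mul_div_assoc', div_lt_iff₀ (by linarith : (0:ℝ) < M'+1)]
        have hq : (0:ℝ) < 1/((m:ℝ)+1) := by positivity
        nlinarith
      linarith
    have hsub2 : Em m ⊆ (A ∩ {t ∈ sector α | ‖S.T t y‖ < ε}) ∩ B := by
      rintro z ⟨⟨hzA, hzs, hz⟩, hzB⟩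
      have hzK : z ∈ K :=
        ⟨hzs, Metric.mem_closedBall.2 (by rw [Complex.dist_eq, sub_zero]; exact hzB.2.le)⟩
      have heq : S.T z y = S.T z x + S.T z (y - x) := by
        rw [(S.T z).map_sub]; abel
      have hTz : ‖S.T z y‖ ≤ ‖S.T z x‖ + ‖S.T z (y - x)‖ := by
        rw [heq]; exact norm_add_le _ _
      have hop : ‖S.T z (y - x)‖ ≤ M' * ‖y - x‖ := by
        calc ‖S.T z (y-x)‖ ≤ ‖S.T z‖ * ‖y - x‖ := (S.T z).le_opNorm _
          _ ≤ M' * ‖y-x‖ := by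
            apply mul_le_mul_of_nonneg_right _ (norm_nonneg _)
            exact le_trans (hM ⟨z, hzK⟩) (le_max_left _ _)
      exact ⟨⟨hzA, hzs, by linarith⟩, hzB⟩
    have hfinal := lt_of_lt_of_le hm (measure_mono hsub2)
    rw [ENNReal.ofReal_lt_iff_lt_toReal (by positivity)
      (ne_top_of_le_ne_top hBfin (measure_mono Set.inter_subset_right))] at hfinal
    unfold ratio
    rw [← hB, lt_div_iff₀ hvpos]
    exact hfinal

end Semigroup

end Stmt15Aux

/-- If the distributionally asymptotic cell of `0` is dense, then for every measurable set
`A ⊆ Δ` of full upper density, the set `P(A)` is a dense `Gδ` subset of `X`. -/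
theorem stmt_15 (α : ℝ) (hα : 0 < α) (hα' : α < Real.pi / 2)
    {𝕜 X : Type*} [NontriviallyNormedField 𝕜] [NormedAddCommGroup X] [NormedSpace 𝕜 X]
    [CompleteSpace X] (S : CZeroSemigroup α 𝕜 X)
    (hdense : Dense {y : X | ∀ ε > (0:ℝ),
      ldens α {t ∈ sector α | ‖S.T t y‖ < ε} = 1 ∧
      udens α {t ∈ sector α | ‖S.T t y‖ < ε} = 1})
    (A : Set ℂ) (hA : A ⊆ sector α) (hAm : MeasurableSet A) (hA1 : udens α A = 1) :
    IsGδ {x : X | ∃ A' ⊆ A, MeasurableSet A' ∧ udens α A' = 1 ∧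
        Tendsto (fun t => ‖S.T t x‖) (alongAbs A') (nhds 0)} ∧
    Dense {x : X | ∃ A' ⊆ A, MeasurableSet A' ∧ udens α A' = 1 ∧
        Tendsto (fun t => ‖S.T t x‖) (alongAbs A') (nhds 0)} := by
  have hαπ : α ≤ Real.pi := by linarith [Real.pi_pos]
  classical
  set P := {x : X | ∃ A' ⊆ A, MeasurableSet A' ∧ udens α A' = 1 ∧
      Tendsto (fun t => ‖S.T t x‖) (alongAbs A') (nhds 0)} with hP
  set Q := {x : X | ∀ n : ℕ, ∀ c < (1:ℝ), ∃ᶠ r in atTop,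
      c < Stmt15Aux.ratio α (A ∩ {t ∈ sector α | ‖S.T t x‖ < 1/(n+1)}) r} with hQ
  have hPQ : P = Q := by
    ext x
    constructor
    · rintro ⟨A', hA'A, hA'm, hA'1, hA'tend⟩
      intro n c hc
      have hev := (Metric.tendsto_nhds.1 hA'tend) (1/(n+1)) (by positivity)
      rw [show alongAbs A' = (atTop.comap (fun z : ℂ => ‖z‖)) ⊓ 𝓟 A' from rfl,
        eventually_inf_principal, eventually_comap] at hev
      obtain ⟨R, hR⟩ := eventually_atTop.1 hev
      have hsub : A' ∩ {z : ℂ | R ≤ ‖z‖}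
          ⊆ A ∩ {t ∈ sector α | ‖S.T t x‖ < 1/(n+1)} := by
        rintro z ⟨hzA', hzR⟩
        have h2 := hR (‖z‖) hzR z rfl hzA'
        rw [Real.dist_eq, sub_zero, abs_of_nonneg (norm_nonneg _)] at h2
        exact ⟨hA'A hzA', hA (hA'A hzA'), h2⟩
      have h1 : udens α (A' ∩ {z : ℂ | R ≤ ‖z‖}) = 1 :=
        Stmt15Aux.udens_inter_abs hα hα' hA'1 R
      exact ((Stmt15Aux.udens_eq_one_iff α _).1 h1 c hc).mono
        (fun r hr => lt_of_lt_of_le hr (Stmt15Aux.ratio_mono α hsub r))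
    · intro hx
      obtain ⟨A', hsub, hm, h1, htend⟩ := Stmt15Aux.construction hα hα' hA
        (fun n => A ∩ {t ∈ sector α | ‖S.T t x‖ < 1/(n+1)})
        (fun n => Set.inter_subset_left)
        (fun n => hAm.inter (Stmt15Aux.meas_lt S x _))
        (fun m n hnm => by
          rintro z ⟨hzA, hzs, hz⟩
          refine ⟨hzA, hzs, lt_of_lt_of_le hz ?_⟩
          apply one_div_le_one_div_of_le (by positivity)
          have h3 : (n:ℝ) ≤ m := Nat.cast_le.2 hnm
          linarith)
        hx (fun t => ‖S.T t x‖) (fun t => norm_nonneg _)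
        (fun n t ht => ht.2.2)
      exact ⟨A', hsub, hm, h1, htend⟩
  constructor
  · rw [hPQ]
    have hQeq : Q = ⋂ (n : ℕ), ⋂ (k : ℕ), ⋂ (N : ℕ),
        {x : X | ∃ r : ℝ, (N:ℝ) ≤ r ∧ 1 - 1/(k+1) <
          Stmt15Aux.ratio α (A ∩ {t ∈ sector α | ‖S.T t x‖ < 1/(n+1)}) r} := by
      ext x
      simp only [hQ, Set.mem_iInter, Set.mem_setOf_eq]
      constructor
      · intro hx n k N
        have hk1 : (1:ℝ) - 1/(k+1) < 1 := by
          have : (0:ℝ) < 1/(k+1) := by positivity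
          linarith
        obtain ⟨r, hr, hr2⟩ := (frequently_atTop.1 (hx n (1 - 1/(k+1)) hk1)) (N:ℝ)
        exact ⟨r, hr, hr2⟩
      · intro hx n c hc
        obtain ⟨k, hk⟩ := exists_nat_one_div_lt (by linarith : (0:ℝ) < 1 - c)
        rw [frequently_atTop]
        intro a
        obtain ⟨N, hN⟩ := exists_nat_ge a
        obtain ⟨r, hr1, hr2⟩ := hx n k N
        exact ⟨r, le_trans hN hr1, by linarith⟩
    rw [hQeq]
    refine IsGδ.iInter fun n => IsGδ.iInter fun k => IsGδ.iInter fun N => IsOpen.isGδ ?_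
    have heq : {x : X | ∃ r : ℝ, (N:ℝ) ≤ r ∧ 1 - 1/(k+1) <
          Stmt15Aux.ratio α (A ∩ {t ∈ sector α | ‖S.T t x‖ < 1/(n+1)}) r}
        = ⋃ (r : ℝ) (_ : r ∈ Set.Ici (N:ℝ)),
          {x : X | 1 - 1/(k+1) <
            Stmt15Aux.ratio α (A ∩ {t ∈ sector α | ‖S.T t x‖ < 1/(n+1)}) r} := by
      ext x
      simp only [Set.mem_iUnion, Set.mem_Ici, Set.mem_setOf_eq, exists_prop]
    rw [heq]
    apply isOpen_biUnion
    intro r hr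
    have hknn : (0:ℝ) ≤ 1 - 1/(k+1) := by
      have h4 : (1:ℝ)/((k:ℝ)+1) ≤ 1 := by
        rw [div_le_one (by positivity)]
        have := Nat.cast_nonneg (α := ℝ) k
        linarith
      linarith
    exact Stmt15Aux.isOpen_gt hα hα' S (by positivity : (0:ℝ) < 1/(n+1)) r _ hknn
  · have hsubset : {y : X | ∀ ε > (0:ℝ),
        ldens α {t ∈ sector α | ‖S.T t y‖ < ε} = 1 ∧
        udens α {t ∈ sector α | ‖S.T t y‖ < ε} = 1} ⊆ P := by
      intro y hy
      have hyQ : y ∈ Q := by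
        rw [hQ, Set.mem_setOf_eq]
        intro n c hc
        have h1 : ldens α {t ∈ sector α | ‖S.T t y‖ < 1/(n+1)} = 1 :=
        (hy (1/(n+1)) (by positivity)).1
        have h2 : udens α (A ∩ {t ∈ sector α | ‖S.T t y‖ < 1/(n+1)}) = 1 :=
          Stmt15Aux.udens_inter_one α (Stmt15Aux.meas_lt S y _) hA1 h1
        exact (Stmt15Aux.udens_eq_one_iff α _).1 h2 c hc
      rw [← hPQ] at hyQ
      exact hyQ
    exact hdense.mono hsubset
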